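/- Let ε > 0 and let ≽ be a weak order on the simplex Δ ⊆ ℝ^{d+1} satisfying ε-Independence: if p ∼ q, α ∈ [0,1] and r ∈ Δ, then there is α' ∈ [0,1] with |α−α'| < ε such that αp+(1−α)r ∼ α'q+(1−α')r. Let p̄, p̲ ∈ Δ satisfy p̄ ≽ p ≽ p̲ for all p ∈ Δ, and suppose u : Δ → [0,1] is such that for every p ∈ Δ, u(p) is the unique α ∈ [0,1] with p ∼ αp̄+(1−α)p̲ (i.e., p ∼ u(p)p̄+(1−u(p))p̲, and for α ≠ α' in [0,1] the mixtures αp̄+(1−α)p̲ and α'p̄+(1−α')p̲ are not indifferent). Then for every K ≥ 1, all p₁,…,p_K ∈ Δ and all λ₁,…,λ_K ≥ 0 with Σ_{k=1}^K λ_k = 1, one has |u(Σ_{k=1}^K λ_k p_k) − Σ_{k=1}^K λ_k u(p_k)| < K²·ε. -/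
import Mathlib


/-- Lemma `lem:approx`: under ε-Independence, the calibrated utility `u`
(defined by `p ∼ u(p)·p̄ + (1-u(p))·p̲`, with the mixture weight unique) is
`K²·ε`-approximately affine on `K`-point convex combinations. -/
theorem stmt_5 (d : ℕ) (hd : 1 ≤ d) (ε : ℝ) (hε : 0 < ε)
    (R : (Fin (d + 1) → ℝ) → (Fin (d + 1) → ℝ) → Prop)
    (Δ : Set (Fin (d + 1) → ℝ)) (hΔ : Δ = stdSimplex ℝ (Fin (d + 1)))
    (hcomp : ∀ p ∈ Δ, ∀ q ∈ Δ, R p q ∨ R q p)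
    (htrans : ∀ p ∈ Δ, ∀ q ∈ Δ, ∀ r ∈ Δ, R p q → R q r → R p r)
    (hindep : ∀ p ∈ Δ, ∀ q ∈ Δ, (R p q ∧ R q p) →
      ∀ α ∈ Set.Icc (0 : ℝ) 1, ∀ r ∈ Δ, ∃ α' ∈ Set.Icc (0 : ℝ) 1,
        |α - α'| < ε ∧
        (R (α • p + (1 - α) • r) (α' • q + (1 - α') • r) ∧
          R (α' • q + (1 - α') • r) (α • p + (1 - α) • r)))
    (pbar punder : Fin (d + 1) → ℝ) (hpbar : pbar ∈ Δ) (hpunder : punder ∈ Δ)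
    (hext : ∀ p ∈ Δ, R pbar p ∧ R p punder)
    (u : (Fin (d + 1) → ℝ) → ℝ)
    (hu01 : ∀ p ∈ Δ, u p ∈ Set.Icc (0 : ℝ) 1)
    (hucal : ∀ p ∈ Δ,
      R p (u p • pbar + (1 - u p) • punder) ∧ R (u p • pbar + (1 - u p) • punder) p)
    (huniq : ∀ α ∈ Set.Icc (0 : ℝ) 1, ∀ α' ∈ Set.Icc (0 : ℝ) 1, α ≠ α' →
      ¬ (R (α • pbar + (1 - α) • punder) (α' • pbar + (1 - α') • punder) ∧
          R (α' • pbar + (1 - α') • punder) (α • pbar + (1 - α) • punder))) :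
    ∀ K : ℕ, 1 ≤ K → ∀ p : Fin K → (Fin (d + 1) → ℝ), (∀ k, p k ∈ Δ) →
      ∀ l : Fin K → ℝ, (∀ k, 0 ≤ l k) → ∑ k, l k = 1 →
      |u (∑ k, l k • p k) - ∑ k, l k * u (p k)| < (K : ℝ) ^ 2 * ε := by
  -- convexity of Δ
  have hconv : Convex ℝ Δ := by rw [hΔ]; exact convex_stdSimplex ℝ _
  have hmem : ∀ a ∈ Set.Icc (0:ℝ) 1, ∀ p ∈ Δ, ∀ q ∈ Δ, a • p + (1 - a) • q ∈ Δ := by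
    intro a ha p hp q hq
    exact hconv hp hq ha.1 (by linarith [ha.2]) (by ring)
  -- two-point lemma
  have key2 : ∀ p ∈ Δ, ∀ q ∈ Δ, ∀ α ∈ Set.Icc (0:ℝ) 1,
      |u (α • p + (1 - α) • q) - (α * u p + (1 - α) * u q)| < 2 * ε := by
    intro p hp q hq α hα
    set s := u p • pbar + (1 - u p) • punder with hs_def
    set t := u q • pbar + (1 - u q) • punder with ht_def
    have hs : s ∈ Δ := hmem _ (hu01 p hp) _ hpbar _ hpunder
    have ht : t ∈ Δ := hmem _ (hu01 q hq) _ hpbar _ hpunder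
    obtain ⟨α', hα', h1, hRC1, hRC2⟩ :=
      hindep p hp s hs (hucal p hp) α hα q hq
    have h1α' : (1 - α') ∈ Set.Icc (0:ℝ) 1 := ⟨by linarith [hα'.2], by linarith [hα'.1]⟩
    obtain ⟨γ, hγ, h2, hRD1, hRD2⟩ :=
      hindep q hq t ht (hucal q hq) (1 - α') h1α' s hs
    have e1 : (1 - α') • q + (1 - (1 - α')) • s = α' • s + (1 - α') • q := by
      rw [show (1 - (1 - α')) = α' by ring]; exact add_comm _ _
    rw [e1] at hRD1 hRD2
    set mix := α • p + (1 - α) • q with hmix_def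
    set C := α' • s + (1 - α') • q with hC_def
    set B := γ • t + (1 - γ) • s with hB_def
    have hmixΔ : mix ∈ Δ := hmem _ hα _ hp _ hq
    have hCΔ : C ∈ Δ := hmem _ hα' _ hs _ hq
    have hBΔ : B ∈ Δ := hmem _ hγ _ ht _ hs
    set β := γ * u q + (1 - γ) * u p with hβ_def
    have hβ : β ∈ Set.Icc (0:ℝ) 1 := by
      constructor
      · nlinarith [(hu01 p hp).1, (hu01 q hq).1, hγ.1, hγ.2]
      · nlinarith [(hu01 p hp).2, (hu01 q hq).2, hγ.1, hγ.2, (hu01 p hp).1, (hu01 q hq).1]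
    have hBeq : B = β • pbar + (1 - β) • punder := by
      funext i
      simp only [hB_def, ht_def, hs_def, hβ_def, Pi.add_apply, Pi.smul_apply, smul_eq_mul]
      ring
    -- mix ∼ B
    have hmixB : R mix B := htrans mix hmixΔ C hCΔ B hBΔ hRC1 hRD1
    have hBmix : R B mix := htrans B hBΔ C hCΔ mix hmixΔ hRD2 hRC2
    -- mix ∼ A
    obtain ⟨hA1, hA2⟩ := hucal mix hmixΔ
    set A := u mix • pbar + (1 - u mix) • punder with hA_def
    have hAΔ : A ∈ Δ := hmem _ (hu01 mix hmixΔ) _ hpbar _ hpunder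
    have hAB : R A B := htrans A hAΔ mix hmixΔ B hBΔ hA2 hmixB
    have hBA : R B A := htrans B hBΔ mix hmixΔ A hAΔ hBmix hA1
    rw [hBeq] at hAB hBA
    have humix : u mix = β := by
      by_contra hne
      exact huniq (u mix) (hu01 mix hmixΔ) β hβ hne ⟨hAB, hBA⟩
    rw [humix]
    have hdiff : β - (α * u p + (1 - α) * u q) = (γ - (1 - α)) * (u q - u p) := by
      rw [hβ_def]; ring
    rw [hdiff, abs_mul]
    have hb1 : |γ - (1 - α)| < 2 * ε := by
      have h2' : |(1 - α') - γ| < ε := h2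
      have : |γ - (1 - α)| ≤ |γ - (1 - α')| + |(1 - α') - (1 - α)| := abs_sub_le _ _ _
      rw [abs_sub_comm γ (1 - α')] at this
      have h3 : |(1 - α') - (1 - α)| = |α - α'| := by
        rw [show (1 - α') - (1 - α) = α - α' by ring]
      linarith [this, h3 ▸ this]
    have hb2 : |u q - u p| ≤ 1 := by
      have := (hu01 p hp).1; have := (hu01 p hp).2
      have := (hu01 q hq).1; have := (hu01 q hq).2
      rw [abs_le]; constructor <;> linarith
    calc |γ - (1 - α)| * |u q - u p| ≤ |γ - (1 - α)| * 1 :=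
          mul_le_mul_of_nonneg_left hb2 (abs_nonneg _)
      _ = |γ - (1 - α)| := mul_one _
      _ < 2 * ε := hb1
  -- main induction: bound (2K - 1) ε
  have main : ∀ K : ℕ, ∀ p : Fin K → (Fin (d + 1) → ℝ), (∀ k, p k ∈ Δ) →
      ∀ l : Fin K → ℝ, (∀ k, 0 ≤ l k) → ∑ k, l k = 1 →
      |u (∑ k, l k • p k) - ∑ k, l k * u (p k)| < (2 * (K:ℝ) - 1) * ε := by
    intro K
    induction K with
    | zero => intro p hp l hl hsum; simp at hsum
    | succ K ih =>
      intro p hp l hl hsum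
      set L := l (Fin.last K) with hL_def
      have hsum' : ∑ k : Fin K, l k.castSucc + L = 1 := by
        rw [← Fin.sum_univ_castSucc]; exact hsum
      have hcs_nonneg : (0:ℝ) ≤ ∑ k : Fin K, l k.castSucc :=
        Finset.sum_nonneg fun k _ => hl _
      have hL0 : 0 ≤ L := hl _
      have hL1 : L ≤ 1 := by linarith
      by_cases hLlt : L < 1
      · -- nondegenerate case
        have h1L : (0:ℝ) < 1 - L := by linarith
        set l' : Fin K → ℝ := fun k => l k.castSucc / (1 - L) with hl'_def
        have hl'_nonneg : ∀ k, 0 ≤ l' k := fun k => div_nonneg (hl _) (le_of_lt h1L)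
        have hl'_sum : ∑ k, l' k = 1 := by
          rw [hl'_def]
          rw [← Finset.sum_div]
          field_simp
          linarith
        set q := ∑ k : Fin K, l' k • p k.castSucc with hq_def
        have hqΔ : q ∈ Δ := by
          apply hconv.sum_mem (fun k _ => hl'_nonneg k) hl'_sum
          intro k _; exact hp _
        have hq2 : (1 - L) • q = ∑ k : Fin K, l k.castSucc • p k.castSucc := by
          rw [hq_def, Finset.smul_sum]
          apply Finset.sum_congr rfl
          intro k _
          rw [smul_smul]
          congr 1
          simp only [hl'_def]
          field_simp
        have hmix_eq : ∑ k, l k • p k = L • p (Fin.last K) + (1 - L) • q := by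
          rw [Fin.sum_univ_castSucc, hq2]
          exact add_comm _ _
        have hS2 : (1 - L) * ∑ k, l' k * u (p k.castSucc)
            = ∑ k : Fin K, l k.castSucc * u (p k.castSucc) := by
          rw [Finset.mul_sum]
          apply Finset.sum_congr rfl
          intro k _
          simp only [hl'_def]
          field_simp
        have husum_eq : ∑ k, l k * u (p k)
            = L * u (p (Fin.last K)) + (1 - L) * ∑ k, l' k * u (p k.castSucc) := by
          rw [Fin.sum_univ_castSucc, hS2]
          exact add_comm _ _
        have hih := ih (fun k => p k.castSucc) (fun k => hp _) l' hl'_nonneg hl'_sum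
        have hkey := key2 (p (Fin.last K)) (hp _) q hqΔ L ⟨hL0, hL1⟩
        rw [hmix_eq, husum_eq]
        set M := L • p (Fin.last K) + (1 - L) • q with hM_def
        set S' := ∑ k, l' k * u (p k.castSucc) with hS'_def
        have tri : |u M - (L * u (p (Fin.last K)) + (1 - L) * S')|
            ≤ |u M - (L * u (p (Fin.last K)) + (1 - L) * u q)|
              + (1 - L) * |u q - S'| := by
          have e : u M - (L * u (p (Fin.last K)) + (1 - L) * S')
              = (u M - (L * u (p (Fin.last K)) + (1 - L) * u q))
                + (1 - L) * (u q - S') := by ring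
          rw [e]
          calc _ ≤ |u M - (L * u (p (Fin.last K)) + (1 - L) * u q)|
                + |(1 - L) * (u q - S')| := abs_add_le _ _
            _ = _ := by rw [abs_mul, abs_of_pos h1L]
        have hsh : (1 - L) * |u q - S'| ≤ |u q - S'| :=
          mul_le_of_le_one_left (abs_nonneg _) (by linarith)
        have : |u M - (L * u (p (Fin.last K)) + (1 - L) * S')|
            < 2 * ε + (2 * (K:ℝ) - 1) * ε := by
          linarith [hkey, hih, tri, hsh]
        push_cast
        linarith
      · -- L = 1
        have hLeq : L = 1 := le_antisymm hL1 (not_lt.mp hLlt)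
        have hzero : ∀ k : Fin K, l k.castSucc = 0 := by
          intro k
          have hall : ∑ k : Fin K, l k.castSucc = 0 := by linarith
          have := (Finset.sum_eq_zero_iff_of_nonneg (fun k _ => hl _)).mp hall
          exact this k (Finset.mem_univ k)
        have e1 : ∑ k, l k • p k = p (Fin.last K) := by
          rw [Fin.sum_univ_castSucc]
          rw [Finset.sum_eq_zero (fun k _ => by rw [hzero k, zero_smul])]
          rw [← hL_def, hLeq, one_smul, zero_add]
        have e2 : ∑ k, l k * u (p k) = u (p (Fin.last K)) := by
          rw [Fin.sum_univ_castSucc]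
          rw [Finset.sum_eq_zero (fun k _ => by rw [hzero k, zero_mul])]
          rw [← hL_def, hLeq, one_mul, zero_add]
        rw [e1, e2, sub_self, abs_zero]
        push_cast
        nlinarith [Nat.cast_nonneg (α := ℝ) K]
  intro K hK p hp l hl hsum
  have h1 := main K p hp l hl hsum
  have h2 : (2 * (K:ℝ) - 1) * ε ≤ (K:ℝ)^2 * ε := by
    have hK1 : (1:ℝ) ≤ (K:ℝ) := by exact_mod_cast hK
    nlinarith [mul_nonneg (sq_nonneg ((K:ℝ) - 1)) hε.le]
  exact lt_of_lt_of_le h1 h2
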